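/- Let x ≥ 4, σ_x ≥ 1/2 + 5/log x, and let β, σ, t, γ be real with σ ≥ σ_x, β ≤ (σ_x − 1/2)/2 + 1/2 (i.e. β − 1/2 ≤ (σ_x − 1/2)/2 with β ≤ 1). Then x^{β−σ}(1 + x^{β−σ})² / ((σ−β)² + (t−γ)²)^{3/2} ≤ (4/5)·log x · x^{1/4 − σ/2} / ((σ_x − β)² + (t−γ)²), provided additionally σ − β ≥ σ_x − β > 0 and (σ_x − 1/2) ≥ 10/log x. -/
import Mathlib


set_option maxHeartbeats 1000000 in
theorem pointwise_zero_sum_bound (x σx β σ t γ : ℝ)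
    (hx : 4 ≤ x)
    (hσx : 1 / 2 + 5 / Real.log x ≤ σx)
    (hβ : β - 1 / 2 ≤ (σx - 1 / 2) / 2) (hβ1 : β ≤ 1)
    (hσ : σx ≤ σ)
    (hσxβ : 0 < σx - β)
    (hσx10 : 10 / Real.log x ≤ σx - 1 / 2) :
    Real.rpow x (β - σ) * (1 + Real.rpow x (β - σ)) ^ 2 /
        ((σ - β) ^ 2 + (t - γ) ^ 2) ^ ((3 : ℝ) / 2) ≤
      (4 / 5) * Real.log x * Real.rpow x (1 / 4 - σ / 2) /
        ((σx - β) ^ 2 + (t - γ) ^ 2) := by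
  have hx0 : (0:ℝ) < x := by linarith
  have hx1 : (1:ℝ) ≤ x := by linarith
  have hL : 0 < Real.log x := Real.log_pos (by linarith)
  have hLσ : 10 ≤ (σx - 1/2) * Real.log x := (div_le_iff₀ hL).mp hσx10
  have hσxβhalf : (σx - 1/2)/2 ≤ σx - β := by linarith
  have hσβ : 0 < σ - β := by linarith
  have hrw1 : Real.rpow x (β - σ) = x ^ (β - σ) := rfl
  have hrw2 : Real.rpow x (1/4 - σ/2) = x ^ (1/4 - σ/2 : ℝ) := rfl
  rw [hrw1, hrw2]
  set p : ℝ := x ^ (β - σ) with hp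
  set q : ℝ := x ^ (1/4 - σ/2 : ℝ) with hq
  have hp0 : 0 < p := Real.rpow_pos_of_pos hx0 _
  have hq0 : 0 < q := Real.rpow_pos_of_pos hx0 _
  have hp1 : p ≤ 1 := Real.rpow_le_one_of_one_le_of_nonpos hx1 (by linarith)
  set D : ℝ := (σx - β)^2 + (t - γ)^2 with hDdef
  set S : ℝ := (σ - β)^2 + (t - γ)^2 with hSdef
  have hD0 : 0 < D := by positivity
  have hS0 : 0 < S := by positivity
  have hA0 : 0 < S ^ ((3:ℝ)/2) := Real.rpow_pos_of_pos hS0 _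
  have hAeq : S ^ ((3:ℝ)/2) = S * Real.sqrt S := by
    have h32 : (3:ℝ)/2 = 1 + 1/2 := by norm_num
    rw [h32, Real.rpow_add hS0, Real.rpow_one, ← Real.sqrt_eq_rpow]
  have hsqrt : σx - β ≤ Real.sqrt S := by
    rw [show σx - β = Real.sqrt ((σx - β)^2) from (Real.sqrt_sq hσxβ.le).symm]
    apply Real.sqrt_le_sqrt
    nlinarith
  have hden : (σx - β) * D ≤ S ^ ((3:ℝ)/2) := by
    rw [hAeq]
    have hDS : D ≤ S := by nlinarith
    nlinarith [Real.sqrt_nonneg S]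
  -- numerator bound
  have hpq : p ≤ q := by
    have : p = q * x ^ (β - σ/2 - 1/4 : ℝ) := by
      rw [hp, hq, ← Real.rpow_add hx0]
      congr 1
      ring
    rw [this]
    have he1 : x ^ (β - σ/2 - 1/4 : ℝ) ≤ 1 :=
      Real.rpow_le_one_of_one_le_of_nonpos hx1 (by linarith)
    calc q * x ^ (β - σ/2 - 1/4 : ℝ) ≤ q * 1 := mul_le_mul_of_nonneg_left he1 hq0.le
      _ = q := mul_one q
  have h2 : 5 ≤ Real.log x * (σx - β) := by
    nlinarith [mul_le_mul_of_nonneg_left hσxβhalf hL.le]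
  have hkey : 4 * p ≤ 4/5 * Real.log x * q * (σx - β) := by
    have h3 : 4 * p ≤ 4 * q := by linarith
    nlinarith [mul_le_mul_of_nonneg_right h2 hq0.le]
  rw [div_le_div_iff₀ hA0 hD0]
  have hb0 : (0:ℝ) ≤ 4/5 * Real.log x * q := by positivity
  have hsq : (1 + p) ^ 2 ≤ 4 := by nlinarith
  calc p * (1 + p) ^ 2 * D ≤ 4 * p * D := by nlinarith [mul_le_mul_of_nonneg_left hsq hp0.le]
    _ ≤ (4/5 * Real.log x * q * (σx - β)) * D := mul_le_mul_of_nonneg_right hkey hD0.le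
    _ = (4/5 * Real.log x * q) * ((σx - β) * D) := by ring
    _ ≤ (4/5 * Real.log x * q) * (S ^ ((3:ℝ)/2)) := mul_le_mul_of_nonneg_left hden hb0
    _ = 4/5 * Real.log x * q * S ^ ((3:ℝ)/2) := by ring
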